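/- Let m = p_1^{k_1} p_2^{k_2} ⋯ p_h^{k_h} be the prime factorization of m ≥ 2 (distinct primes p_i, k_i ≥ 1), let T_f be a surjective linear cellular automaton on (ZMod m)^ℤ with local rule f(x_l,…,x_r) = Σ λ_i x_i (mod m), and for each i let T_{p_i^{k_i}} be the linear cellular automaton on (ZMod p_i^{k_i})^ℤ whose local rule is f reduced modulo p_i^{k_i}. Then T_f is strong mixing with respect to the uniform Bernoulli measure on (ZMod m)^ℤ if and only if for every 1 ≤ i ≤ h the automaton T_{p_i^{k_i}} is strong mixing with respect to the uniform Bernoulli measure on (ZMod p_i^{k_i})^ℤ. -/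

import Mathlib

open MeasureTheory Filter

/-- The linear cellular automaton on `(ZMod m)^ℤ` with local rule
`f(x_l, …, x_r) = Σ_{j=l}^{r} λ_j x_j (mod m)`. -/
noncomputable def cellAuto (m : ℕ) (l r : ℤ) (lam : ℤ → ZMod m) :
    (ℤ → ZMod m) → (ℤ → ZMod m) :=
  fun x i => ∑ j ∈ Finset.Icc l r, lam j * x (i + j)

/-- `μ` is the uniform Bernoulli measure on `(ZMod d)^ℤ`: the infinite product over `ℤ`
of the uniform probability measure on `ZMod d`, characterized by its values on cylinders. -/
def IsUniformBernoulli (d : ℕ) (μ : Measure (ℤ → ZMod d)) : Prop :=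
  IsProbabilityMeasure μ ∧
    ∀ (s : Finset ℤ) (a : ℤ → ZMod d),
      μ {x | ∀ i ∈ s, x i = a i} = ((d : ENNReal))⁻¹ ^ s.card

/-- `T` is strong mixing with respect to `μ`. -/
def StrongMixing {X : Type*} [MeasurableSpace X] (T : X → X) (μ : Measure X) : Prop :=
  ∀ A B : Set X, MeasurableSet A → MeasurableSet B →
    Tendsto (fun n : ℕ => μ (T^[n] ⁻¹' A ∩ B)) atTop (nhds (μ A * μ B))

set_option linter.unusedSectionVars false
open scoped ENNReal

section Cylinders

variable (d : ℕ) [NeZero d]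

lemma measurableSet_cylSet (s : Finset ℤ) (a : ℤ → ZMod d) :
    MeasurableSet {x : ℤ → ZMod d | ∀ i ∈ s, x i = a i} := by
  have : {x : ℤ → ZMod d | ∀ i ∈ s, x i = a i} = ⋂ i ∈ s, (fun x => x i) ⁻¹' {a i} := by
    ext x; simp
  rw [this]
  exact MeasurableSet.biInter s.countable_toSet
    (fun i _ => (measurable_pi_apply i) (MeasurableSet.singleton (a i)))

/-- point cylinders -/
def Cyl : Set (Set (ℤ → ZMod d)) :=
  {S | ∃ (s : Finset ℤ) (a : ℤ → ZMod d), S = {x | ∀ i ∈ s, x i = a i}}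

lemma isPiSystem_Cyl : IsPiSystem (Cyl d) := by
  rintro S ⟨s, a, rfl⟩ T ⟨t, b, rfl⟩ hne
  obtain ⟨x₀, hx₀⟩ := hne
  refine ⟨s ∪ t, x₀, ?_⟩
  ext y
  simp only [Set.mem_inter_iff, Set.mem_setOf_eq, Finset.mem_union]
  constructor
  · rintro ⟨h1, h2⟩ i hi
    rcases hi with hi | hi
    · rw [h1 i hi, ← hx₀.1 i hi]
    · rw [h2 i hi, ← hx₀.2 i hi]
  · intro h
    exact ⟨fun i hi => (h i (Or.inl hi)).trans (hx₀.1 i hi),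
      fun i hi => (h i (Or.inr hi)).trans (hx₀.2 i hi)⟩

lemma generateFrom_Cyl :
    (inferInstance : MeasurableSpace (ℤ → ZMod d)) = MeasurableSpace.generateFrom (Cyl d) := by
  refine le_antisymm ?_ ?_
  · rw [show (inferInstance : MeasurableSpace (ℤ → ZMod d)) = MeasurableSpace.pi from rfl,
      MeasurableSpace.pi]
    refine iSup_le fun i => ?_
    intro S hS
    obtain ⟨t, -, rfl⟩ := hS
    have : (fun x : ℤ → ZMod d => x i) ⁻¹' t
        = ⋃ c ∈ t, {x : ℤ → ZMod d | ∀ j ∈ ({i} : Finset ℤ), x j = c} := by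
      ext x
      simp only [Set.mem_preimage, Set.mem_iUnion, Set.mem_setOf_eq, Finset.mem_singleton]
      constructor
      · intro h; exact ⟨x i, h, fun j hj => by rw [hj]⟩
      · rintro ⟨c, hc, h⟩; rw [h i rfl]; exact hc
    rw [this]
    exact MeasurableSet.biUnion t.to_countable
      (fun c _ => MeasurableSpace.measurableSet_generateFrom ⟨{i}, fun _ => c, rfl⟩)
  · rw [MeasurableSpace.generateFrom_le_iff]
    rintro S ⟨s, a, rfl⟩
    exact measurableSet_cylSet d s a

lemma ub_unique (μ ν : Measure (ℤ → ZMod d)) (hμ : IsUniformBernoulli d μ)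
    (hν : IsUniformBernoulli d ν) : μ = ν := by
  have := hμ.1
  refine ext_of_generate_finite (Cyl d) (generateFrom_Cyl d) (isPiSystem_Cyl d) ?_ ?_
  · rintro S ⟨s, a, rfl⟩
    rw [hμ.2 s a, hν.2 s a]
  · rw [hμ.1.measure_univ, hν.1.measure_univ]

end Cylinders
section Counting

open scoped Classical

variable (d : ℕ) [NeZero d]

/-- measure of a finite-coordinate set -/
lemma measure_finCoord (μ : Measure (ℤ → ZMod d)) (hμ : IsUniformBernoulli d μ)
    (u : Finset ℤ) (E : Finset ((i : u) → ZMod d)) :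
    μ {x : ℤ → ZMod d | (fun i : u => x i) ∈ E} = E.card * ((d : ENNReal))⁻¹ ^ u.card := by
  have hset : {x : ℤ → ZMod d | (fun i : u => x i) ∈ E}
      = ⋃ e ∈ E, {x : ℤ → ZMod d | ∀ i ∈ u, x i = (fun j : ℤ =>
          if h : j ∈ u then e ⟨j, h⟩ else 0) i} := by
    ext x
    simp only [Set.mem_setOf_eq, Set.mem_iUnion]
    constructor
    · intro h
      exact ⟨_, h, fun i hi => by simp [dif_pos hi]⟩
    · rintro ⟨e, he, h⟩
      have : (fun i : u => x i) = e := by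
        funext i
        have := h i i.2
        simpa [dif_pos i.2] using this
      rwa [this]
  rw [hset, measure_biUnion_finset ?_ (fun e _ => measurableSet_cylSet d u _)]
  · rw [Finset.sum_congr rfl (fun e _ => hμ.2 u _), Finset.sum_const, nsmul_eq_mul]
  · -- pairwise disjoint
    intro e he f hf hef
    simp only [Function.onFun]
    rw [Set.disjoint_left]
    intro x hx hx'
    apply hef
    funext i
    have h1 := hx i i.2
    have h2 := hx' i i.2
    simp only [dif_pos i.2] at h1 h2
    rw [← h1, ← h2]

end Counting

section MixingLemmas

variable {X : Type*} [MeasurableSpace X]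

lemma StrongMixing.preserving {T : X → X} {μ : Measure X} (hT : Measurable T)
    [IsProbabilityMeasure μ] (h : StrongMixing T μ) {A : Set X} (hA : MeasurableSet A) :
    μ (T ⁻¹' A) = μ A := by
  have h1 : Tendsto (fun n : ℕ => μ (T^[n] ⁻¹' (T ⁻¹' A) ∩ Set.univ)) atTop
      (nhds (μ (T ⁻¹' A) * μ Set.univ)) := h _ _ (hT hA) MeasurableSet.univ
  have h2 : Tendsto (fun n : ℕ => μ (T^[n+1] ⁻¹' A ∩ Set.univ)) atTop
      (nhds (μ A * μ Set.univ)) :=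
    (h A Set.univ hA MeasurableSet.univ).comp (tendsto_add_atTop_nat 1)
  have heq : (fun n : ℕ => μ (T^[n] ⁻¹' (T ⁻¹' A) ∩ Set.univ))
      = fun n : ℕ => μ (T^[n+1] ⁻¹' A ∩ Set.univ) := by
    funext n
    rw [← Set.preimage_comp, ← Function.iterate_succ']
  rw [heq] at h1
  have := tendsto_nhds_unique h1 h2
  simpa using this

lemma preserving_iterate {T : X → X} {μ : Measure X} (hT : Measurable T)
    (h : ∀ A : Set X, MeasurableSet A → μ (T ⁻¹' A) = μ A) (n : ℕ)
    {A : Set X} (hA : MeasurableSet A) : μ (T^[n] ⁻¹' A) = μ A := by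
  induction n generalizing A with
  | zero => simp
  | succ k ih =>
    rw [Function.iterate_succ', Set.preimage_comp]
    rw [ih (hT hA), h _ hA]

end MixingLemmas
section TsumTendsto

open scoped ENNReal

lemma tendsto_tsum_dominated (g : ℕ → ℕ → ℝ≥0∞) (l c : ℕ → ℝ≥0∞)
    (hdom : ∀ k n, g k n ≤ c k) (hc : ∑' k, c k ≠ ⊤)
    (hl : ∀ k, Tendsto (g k) atTop (nhds (l k))) :
    Tendsto (fun n => ∑' k, g k n) atTop (nhds (∑' k, l k)) := by
  have hlc : ∀ k, l k ≤ c k := fun k => le_of_tendsto (hl k) (Filter.Eventually.of_forall (hdom k))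
  have hL : ∑' k, l k ≠ ⊤ := ne_top_of_le_ne_top hc (ENNReal.tsum_le_tsum hlc)
  set L := ∑' k, l k with hLdef
  rw [ENNReal.tendsto_nhds hL]
  intro ε hε
  set ε2 : ℝ≥0∞ := min 1 ε / 2 with hε2def
  have hε2pos : 0 < ε2 := ENNReal.div_pos ((lt_min one_pos hε).ne') (by norm_num)
  have hε2top : ε2 ≠ ⊤ := by
    apply ne_top_of_le_ne_top (by norm_num : (1:ℝ≥0∞)/2 ≠ ⊤)
    exact ENNReal.div_le_div_right (min_le_left _ _) 2
  have hε2ε : ε2 + ε2 ≤ ε := by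
    rw [← two_mul, hε2def, ENNReal.mul_div_cancel' (by norm_num) (by norm_num)]
    exact min_le_right _ _
  -- choose K with tail of c below ε2
  obtain ⟨K, hK⟩ := (ENNReal.nhds_zero_basis.tendsto_right_iff.mp
      (ENNReal.tendsto_sum_nat_add c hc) ε2 hε2pos).exists
  have htail : ∑' k, c (k + K) < ε2 := hK
  have hsplitL : L = (∑ k ∈ Finset.range K, l k) + ∑' k, l (k + K) :=
    (Summable.sum_add_tsum_nat_add' (f := l) (k := K) ENNReal.summable).symm
  have hsplitg : ∀ n, ∑' k, g k n = (∑ k ∈ Finset.range K, g k n) + ∑' k, g (k + K) n :=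
    fun n => (Summable.sum_add_tsum_nat_add' (f := fun k => g k n) (k := K) ENNReal.summable).symm
  set L1 := ∑ k ∈ Finset.range K, l k with hL1def
  have hL1top : L1 ≠ ⊤ := by
    refine ne_top_of_le_ne_top hL ?_
    rw [hsplitL]; exact le_self_add
  have hS : Tendsto (fun n => ∑ k ∈ Finset.range K, g k n) atTop (nhds L1) :=
    tendsto_finset_sum _ (fun k _ => hl k)
  have hSmem := (ENNReal.tendsto_nhds hL1top).mp hS ε2 hε2pos
  filter_upwards [hSmem] with n hn
  constructor
  · -- L - ε ≤ total n
    have h1 : L ≤ L1 + ε2 := by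
      rw [hsplitL]
      have : ∑' k, l (k + K) ≤ ε2 :=
        le_of_lt (lt_of_le_of_lt (ENNReal.tsum_le_tsum (fun k => hlc (k + K))) htail)
      exact add_le_add_right this L1
    have h2 : L1 - ε2 ≤ ∑' k, g k n := by
      rw [hsplitg n]
      exact le_trans hn.1 le_self_add
    calc L - ε ≤ (L1 + ε2) - ε := tsub_le_tsub_right h1 ε
    _ ≤ (L1 + ε2) - (ε2 + ε2) := tsub_le_tsub_left hε2ε _
    _ ≤ L1 - ε2 := by
        rw [add_comm ε2 ε2, ← tsub_tsub]
        exact tsub_le_tsub_right (by simp [ENNReal.add_sub_cancel_right hε2top]) ε2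
    _ ≤ ∑' k, g k n := h2
  · -- total n ≤ L + ε
    rw [hsplitg n]
    have h1 : ∑' k, g (k + K) n ≤ ε2 :=
      le_of_lt (lt_of_le_of_lt (ENNReal.tsum_le_tsum (fun k => hdom (k + K) n)) htail)
    calc (∑ k ∈ Finset.range K, g k n) + ∑' k, g (k + K) n
        ≤ (L1 + ε2) + ε2 := add_le_add hn.2 h1
    _ ≤ L + (ε2 + ε2) := by rw [add_assoc]; exact add_le_add_left (by rw [hsplitL]; exact le_self_add) _
    _ ≤ L + ε := add_le_add_right hε2ε L

end TsumTendsto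
section Dynkin

variable {X : Type*} [MeasurableSpace X]

lemma strongMixing_of_piSystem (T : X → X) (hT : Measurable T) (μ : Measure X)
    [IsProbabilityMeasure μ]
    (hpres : ∀ S : Set X, MeasurableSet S → μ (T ⁻¹' S) = μ S)
    (C : Set (Set X)) (hC : IsPiSystem C)
    (hgen : (inferInstance : MeasurableSpace X) = MeasurableSpace.generateFrom C)
    (h : ∀ A ∈ C, ∀ B ∈ C,
      Tendsto (fun n : ℕ => μ (T^[n] ⁻¹' A ∩ B)) atTop (nhds (μ A * μ B))) :
    StrongMixing T μ := by
  have hpn : ∀ (n : ℕ) (S : Set X), MeasurableSet S → μ (T^[n] ⁻¹' S) = μ S :=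
    fun n S hS => preserving_iterate hT hpres n hS
  -- Step 1: for B ∈ C, extend over A
  have step1 : ∀ B ∈ C, ∀ ⦃A : Set X⦄, MeasurableSet A →
      Tendsto (fun n : ℕ => μ (T^[n] ⁻¹' A ∩ B)) atTop (nhds (μ A * μ B)) := by
    intro B hB
    refine MeasurableSpace.induction_on_inter hgen hC ?_ (fun A hA => h A hA B hB) ?_ ?_
    · simpa using tendsto_const_nhds
    · -- compl
      intro A hA hten
      have hBmeas : MeasurableSet B :=
        (le_of_eq hgen.symm) _ (MeasurableSpace.measurableSet_generateFrom hB)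
      have hkey : ∀ n : ℕ, μ (T^[n] ⁻¹' Aᶜ ∩ B) = μ B - μ (T^[n] ⁻¹' A ∩ B) := by
        intro n
        have : T^[n] ⁻¹' Aᶜ ∩ B = B \ (T^[n] ⁻¹' A ∩ B) := by
          ext x; simp [Set.mem_diff]; tauto
        rw [this, measure_diff Set.inter_subset_right
          (((hT.iterate n) hA).inter hBmeas).nullMeasurableSet (measure_ne_top μ _)]
      simp_rw [hkey]
      have hlim : μ Aᶜ * μ B = μ B - μ A * μ B := by
        rw [prob_compl_eq_one_sub hA, ENNReal.sub_mul (fun _ _ => measure_ne_top μ B), one_mul]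
      rw [hlim]
      have hsub : Tendsto (fun n : ℕ => μ B - μ (T^[n] ⁻¹' A ∩ B)) atTop
          (nhds (μ B - μ A * μ B)) :=
        ENNReal.Tendsto.sub tendsto_const_nhds hten (Or.inl (measure_ne_top μ B))
      exact hsub
    · -- disjoint unions
      intro f hdisj hmeas hten
      have hBmeas : MeasurableSet B :=
        (le_of_eq hgen.symm) _ (MeasurableSpace.measurableSet_generateFrom hB)
      have heq : ∀ n : ℕ, μ (T^[n] ⁻¹' (⋃ k, f k) ∩ B) = ∑' k, μ (T^[n] ⁻¹' (f k) ∩ B) := by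
        intro n
        rw [Set.preimage_iUnion, Set.iUnion_inter]
        exact measure_iUnion
          (fun i j hij =>
            Disjoint.mono Set.inter_subset_left Set.inter_subset_left ((hdisj hij).preimage _))
          (fun k => ((hT.iterate n) (hmeas k)).inter hBmeas)
      simp_rw [heq]
      have htarget : μ (⋃ k, f k) * μ B = ∑' k, μ (f k) * μ B := by
        rw [measure_iUnion hdisj hmeas, ENNReal.tsum_mul_right]
      rw [htarget]
      exact tendsto_tsum_dominated _ _ (fun k => μ (f k))
        (fun k n => le_trans (measure_mono Set.inter_subset_left) (le_of_eq (hpn n _ (hmeas k))))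
        (by rw [← measure_iUnion hdisj hmeas]; exact measure_ne_top μ _)
        hten
  -- Step 2: extend over B
  intro A B hA hBm
  revert B
  refine MeasurableSpace.induction_on_inter hgen hC ?_ (fun B hB => step1 B hB hA) ?_ ?_
  · simpa using tendsto_const_nhds
  · intro B hB hten
    have hkey : ∀ n : ℕ, μ (T^[n] ⁻¹' A ∩ Bᶜ) = μ A - μ (T^[n] ⁻¹' A ∩ B) := by
      intro n
      have : T^[n] ⁻¹' A ∩ Bᶜ = T^[n] ⁻¹' A \ (T^[n] ⁻¹' A ∩ B) := by
        rw [Set.diff_self_inter, Set.diff_eq]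
      rw [this, measure_diff Set.inter_subset_left
        (((hT.iterate n) hA).inter hB).nullMeasurableSet (measure_ne_top μ _), hpn n A hA]
    simp_rw [hkey]
    have hlim : μ A * μ Bᶜ = μ A - μ A * μ B := by
      rw [prob_compl_eq_one_sub hB, ENNReal.mul_sub (fun _ _ => measure_ne_top μ _), mul_one]
    rw [hlim]
    exact ENNReal.Tendsto.sub tendsto_const_nhds hten (Or.inl (measure_ne_top μ A))
  · intro f hdisj hmeas hten
    have heq : ∀ n : ℕ, μ (T^[n] ⁻¹' A ∩ ⋃ k, f k) = ∑' k, μ (T^[n] ⁻¹' A ∩ f k) := by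
      intro n
      rw [Set.inter_iUnion]
      exact measure_iUnion
        (fun i j hij => Disjoint.mono Set.inter_subset_right Set.inter_subset_right (hdisj hij))
        (fun k => ((hT.iterate n) hA).inter (hmeas k))
    simp_rw [heq]
    have htarget : μ A * μ (⋃ k, f k) = ∑' k, μ A * μ (f k) := by
      rw [measure_iUnion hdisj hmeas, ENNReal.tsum_mul_left]
    rw [htarget]
    exact tendsto_tsum_dominated _ _ (fun k => μ (f k))
      (fun k n => measure_mono Set.inter_subset_right)
      (by rw [← measure_iUnion hdisj hmeas]; exact measure_ne_top μ _)
      hten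

end Dynkin
section Fiber

lemma card_fiber_eq {α β : Type*} [Fintype α] [DecidableEq β] [AddCommGroup α] [AddCommGroup β]
    (f : α → β) (hadd : ∀ x y, f (x + y) = f x + f y) (hsub : ∀ x y, f (x - y) = f x - f y)
    (hf : Function.Surjective f) (b c : β) :
    (Finset.univ.filter fun a => f a = b).card
      = (Finset.univ.filter fun a => f a = c).card := by
  obtain ⟨xb, hxb⟩ := hf b
  obtain ⟨xc, hxc⟩ := hf c
  refine Finset.card_bij' (fun a _ => a + (xc - xb)) (fun a _ => a - (xc - xb)) ?_ ?_ ?_ ?_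
  · intro a ha
    simp only [Finset.mem_filter, Finset.mem_univ, true_and] at ha ⊢
    rw [hadd, hsub, ha, hxb, hxc]
    abel
  · intro a ha
    simp only [Finset.mem_filter, Finset.mem_univ, true_and] at ha ⊢
    rw [hsub, hsub, ha, hxb, hxc]
    abel
  · intro a _; exact add_sub_cancel_right a _
  · intro a _; exact sub_add_cancel _ _

lemma card_fiber_mul {α β : Type*} [Fintype α] [Fintype β] [DecidableEq β] [AddCommGroup α]
    [AddCommGroup β]
    (f : α → β) (hadd : ∀ x y, f (x + y) = f x + f y) (hsub : ∀ x y, f (x - y) = f x - f y)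
    (hf : Function.Surjective f) (b : β) :
    (Finset.univ.filter fun a => f a = b).card * Fintype.card β = Fintype.card α := by
  have h1 : Fintype.card α = ∑ c : β, (Finset.univ.filter fun a => f a = c).card :=
    Finset.card_eq_sum_card_fiberwise (fun a _ => Finset.mem_univ (f a))
  rw [h1, Finset.sum_congr rfl (fun c _ => (card_fiber_eq f hadd hsub hf c b).trans rfl)]
  rw [Finset.sum_const, smul_eq_mul, mul_comm]
  rfl

end Fiber

section CRT

variable (m : ℕ) (hm : 2 ≤ m)

local notation "pfT" => {p : ℕ // p ∈ m.primeFactors}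

/-- the prime power -/
abbrev dd (p : pfT) : ℕ := (p : ℕ) ^ m.factorization p

lemma dd_nezero (p : pfT) : NeZero (dd m p) := by
  have hp := Nat.prime_of_mem_primeFactors p.2
  exact ⟨pow_ne_zero _ hp.ne_zero⟩

/-- reduction mod the prime power -/
def cst (p : pfT) : ZMod m →+* ZMod (dd m p) :=
  ZMod.castHom (Nat.ordProj_dvd m p) (ZMod (dd m p))

lemma cst_surjective (p : pfT) : Function.Surjective (cst m p) := by
  haveI := dd_nezero m p
  intro y
  exact ⟨((y.val : ℕ) : ZMod m), by rw [map_natCast, ZMod.natCast_rightInverse y]⟩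

include hm in
lemma prod_dd : ∏ p ∈ Finset.univ (α := pfT), dd m p = m := by
  have hm0 : m ≠ 0 := by omega
  rw [Finset.univ_eq_attach]
  have h2 : ∏ p ∈ m.primeFactors.attach, dd m p
      = ∏ p ∈ m.primeFactors, p ^ m.factorization p :=
    Finset.prod_attach m.primeFactors (fun p => p ^ m.factorization p)
  rw [h2]
  conv_rhs => rw [← Nat.factorization_prod_pow_eq_self hm0]
  rw [Finsupp.prod, Nat.support_factorization]

include hm in
lemma crt_inj : ∀ x y : ZMod m, (∀ p : pfT, cst m p x = cst m p y) → x = y := by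
  haveI : NeZero m := ⟨by omega⟩
  intro x y h
  have hz : ∀ p : pfT, cst m p (x - y) = 0 := by
    intro p; rw [map_sub, h p, sub_self]
  have hval : ∀ p : pfT, dd m p ∣ (x - y).val := by
    intro p
    haveI := dd_nezero m p
    have h1 : cst m p (((x - y).val : ℕ) : ZMod m) = 0 := by
      rw [ZMod.natCast_rightInverse (x - y)]; exact hz p
    rw [map_natCast] at h1
    exact (ZMod.natCast_eq_zero_iff _ _).mp h1
  have hv0 : (x - y).val = 0 := by
    by_cases hv : (x - y).val = 0
    · exact hv
    · exfalso
      have hdvd : m ∣ (x - y).val := by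
        refine (Nat.factorization_le_iff_dvd (by omega) hv).mp ?_
        rw [Finsupp.le_iff]
        intro p hp
        rw [Nat.support_factorization] at hp
        have := hval ⟨p, hp⟩
        exact ((Nat.prime_of_mem_primeFactors hp).pow_dvd_iff_le_factorization hv).mp this
      exact hv (Nat.eq_zero_of_dvd_of_lt hdvd (ZMod.val_lt _))
  have hxy : x - y = 0 := by
    have h2 := ZMod.natCast_rightInverse (x - y)
    rw [← h2, hv0]
    simp
  exact sub_eq_zero.mp hxy
include hm in
lemma psi_bij : Function.Bijective (fun (x : ZMod m) (p : pfT) => cst m p x) := by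
  haveI : NeZero m := ⟨by omega⟩
  haveI := fun p : pfT => dd_nezero m p
  rw [Fintype.bijective_iff_injective_and_card]
  refine ⟨fun x y hxy => crt_inj m hm x y (fun p => congrFun hxy p), ?_⟩
  rw [ZMod.card, Fintype.card_pi]
  have : ∀ p : pfT, Fintype.card (ZMod (dd m p)) = dd m p := fun p => ZMod.card _
  rw [Finset.prod_congr rfl (fun p _ => this p), prod_dd m hm]

include hm in
lemma chi_bij (u : Finset ℤ) :
    Function.Bijective (fun (e : (i : u) → ZMod m) (p : pfT) (i : u) => cst m p (e i)) := by
  constructor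
  · intro e e' h
    funext i
    exact crt_inj m hm _ _ (fun p => congrFun (congrFun h p) i)
  · intro g
    refine ⟨fun i => (Equiv.ofBijective _ (psi_bij m hm)).symm (fun p => g p i), ?_⟩
    funext p i
    exact congrFun ((Equiv.ofBijective _ (psi_bij m hm)).apply_symm_apply (fun p => g p i)) p

lemma cst_fiber_card [NeZero m] (p : pfT) (c : ZMod (dd m p)) :
    (Finset.univ.filter fun v : ZMod m => cst m p v = c).card * dd m p = m := by
  haveI := dd_nezero m p
  have h := card_fiber_mul (⇑(cst m p)) (fun x y => map_add _ x y) (fun x y => map_sub _ x y)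
    (cst_surjective m p) c
  rwa [ZMod.card, ZMod.card] at h

/-- reduction map on configurations -/
def Phi (p : pfT) : (ℤ → ZMod m) → (ℤ → ZMod (dd m p)) := fun x i => cst m p (x i)

lemma measurable_Phi (p : pfT) : Measurable (Phi m p) := by
  haveI : NeZero m := ⟨(Nat.mem_primeFactors.mp p.2).2.2⟩
  exact measurable_pi_lambda _ (fun i => (measurable_of_countable _).comp (measurable_pi_apply i))

lemma map_ub (p : pfT) (μ : Measure (ℤ → ZMod m)) (hμ : IsUniformBernoulli m μ) :
    IsUniformBernoulli (dd m p) (μ.map (Phi m p)) := by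
  haveI : NeZero m := ⟨(Nat.mem_primeFactors.mp p.2).2.2⟩
  haveI := dd_nezero m p
  haveI := hμ.1
  refine ⟨Measure.isProbabilityMeasure_map (measurable_Phi m p).aemeasurable, ?_⟩
  intro s a
  rw [Measure.map_apply (measurable_Phi m p) (measurableSet_cylSet _ s a)]
  set E : Finset ((i : s) → ZMod m) :=
    Finset.univ.filter (fun e => ∀ i : s, cst m p (e i) = a i) with hE
  have hset : Phi m p ⁻¹' {x | ∀ i ∈ s, x i = a i} = {x : ℤ → ZMod m | (fun i : s => x i) ∈ E} := by
    ext x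
    simp only [Set.mem_preimage, Set.mem_setOf_eq, hE, Finset.mem_filter, Finset.mem_univ,
      true_and, Phi]
    constructor
    · intro h i; exact h i i.2
    · intro h i hi; exact h ⟨i, hi⟩
  rw [hset, measure_finCoord m μ hμ s E]
  -- count E
  set c0 := (Finset.univ.filter fun v : ZMod m => cst m p v = 0).card with hc0
  have hcard : E.card = c0 ^ s.card := by
    rw [hE, ← Fintype.card_subtype]
    rw [Fintype.card_congr (Equiv.subtypePiEquivPi
        (α := { x // x ∈ s }) (β := fun _ => ZMod m) (p := fun i v => cst m p v = a ↑i)),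
      Fintype.card_pi]
    have : ∀ i : s, Fintype.card {v : ZMod m // cst m p v = a i} = c0 := by
      intro i
      rw [Fintype.card_subtype, hc0]
      exact card_fiber_eq (⇑(cst m p)) (fun x y => map_add _ x y) (fun x y => map_sub _ x y)
        (cst_surjective m p) _ _
    rw [Finset.prod_congr rfl (fun i _ => this i), Finset.prod_const, Finset.card_univ, Fintype.card_coe]
  rw [hcard]
  have hfib := cst_fiber_card m p 0
  rw [← hc0] at hfib
  -- now pure ENNReal arithmetic
  have hc0dd : (c0 : ℝ≥0∞) * (dd m p : ℝ≥0∞) = (m : ℝ≥0∞) := by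
    exact_mod_cast congrArg (fun k : ℕ => (k : ℝ≥0∞)) hfib
  have hddne : (dd m p : ℝ≥0∞) ≠ 0 := Nat.cast_ne_zero.mpr (dd_nezero m p).1
  have hc0ne : (c0 : ℝ≥0∞) ≠ 0 := by
    intro h0
    rw [h0, zero_mul] at hc0dd
    exact (Nat.cast_ne_zero.mpr (NeZero.ne m)) hc0dd.symm
  have hkey : (c0 : ℝ≥0∞) * ((m : ℝ≥0∞))⁻¹ = ((dd m p : ℝ≥0∞))⁻¹ := by
    rw [← hc0dd, ENNReal.mul_inv (Or.inl hc0ne) (Or.inl (ENNReal.natCast_ne_top c0)),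
      ← mul_assoc, ENNReal.mul_inv_cancel hc0ne (ENNReal.natCast_ne_top c0), one_mul]
  rw [Nat.cast_pow, ← mul_pow, hkey]
include hm in
lemma prod_dd_inv_pow (k : ℕ) :
    ∏ p : pfT, (((dd m p : ℝ≥0∞))⁻¹ ^ k) = (((m : ℝ≥0∞))⁻¹ ^ k) := by
  haveI := fun p : pfT => dd_nezero m p
  rw [Finset.prod_pow]
  congr 1
  rw [← ENNReal.prod_inv_distrib (fun i _ j _ _ =>
    Or.inl (Nat.cast_ne_zero.mpr (dd_nezero m i).1))]
  congr 1
  rw [← Nat.cast_prod, prod_dd m hm]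

lemma semiconj_Phi (l r : ℤ) (lam : ℤ → ZMod m) (p : pfT) :
    Function.Semiconj (Phi m p) (cellAuto m l r lam)
      (cellAuto (dd m p) l r (fun i => cst m p (lam i))) := by
  intro x
  funext i
  simp only [Phi, cellAuto, map_sum, map_mul]

lemma preimage_iter (l r : ℤ) (lam : ℤ → ZMod m) (p : pfT) (n : ℕ)
    (A : Set (ℤ → ZMod (dd m p))) :
    Phi m p ⁻¹' ((cellAuto (dd m p) l r (fun i => cst m p (lam i)))^[n] ⁻¹' A)
      = (cellAuto m l r lam)^[n] ⁻¹' (Phi m p ⁻¹' A) := by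
  ext x
  simp only [Set.mem_preimage]
  rw [((semiconj_Phi m l r lam p).iterate_right n).eq x]

include hm in
lemma measure_iInter_factorize (μ : Measure (ℤ → ZMod m)) (hμ : IsUniformBernoulli m μ)
    (u : Finset ℤ) (C : ∀ p : pfT, Set (ℤ → ZMod (dd m p)))
    (E : ∀ p : pfT, Finset ((i : u) → ZMod (dd m p)))
    (hC : ∀ p, C p = {y | (fun i : u => y i) ∈ E p}) :
    μ (⋂ p : pfT, Phi m p ⁻¹' C p) = ∏ p : pfT, (μ.map (Phi m p)) (C p) := by
  haveI : NeZero m := ⟨by omega⟩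
  haveI := fun p : pfT => dd_nezero m p
  classical
  set F : Finset ((i : u) → ZMod m) :=
    Finset.univ.filter (fun e => ∀ p : pfT, (fun i : u => cst m p (e i)) ∈ E p) with hF
  have hset : (⋂ p : pfT, Phi m p ⁻¹' C p) = {x : ℤ → ZMod m | (fun i : u => x i) ∈ F} := by
    ext x
    simp only [Set.mem_iInter, Set.mem_preimage, hF, Finset.mem_filter, Finset.mem_univ,
      true_and, Set.mem_setOf_eq]
    constructor
    · intro h p
      have := h p
      rw [hC p] at this
      exact this
    · intro h p
      rw [hC p]
      exact h p
  have hinner : ∀ p : pfT, (μ.map (Phi m p)) (C p)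
      = ((E p).card : ℝ≥0∞) * ((dd m p : ℝ≥0∞))⁻¹ ^ u.card := by
    intro p
    rw [hC p]
    exact measure_finCoord (dd m p) _ (map_ub m p μ hμ) u (E p)
  rw [hset, measure_finCoord m μ hμ u F, Finset.prod_congr rfl (fun p _ => hinner p)]
  -- card F
  have hcard : F.card = ∏ p : pfT, (E p).card := by
    rw [hF, ← Fintype.card_subtype]
    have e : {x : (i : u) → ZMod m // ∀ p : pfT, (fun i : u => cst m p (x i)) ∈ E p}
        ≃ ((p : pfT) → {g : (i : u) → ZMod (dd m p) // g ∈ E p}) :=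
      (Equiv.subtypeEquiv (Equiv.ofBijective _ (chi_bij m hm u))
        (fun e => Iff.rfl)).trans (Equiv.subtypePiEquivPi
          (p := fun (p : pfT) (g : (i : u) → ZMod (dd m p)) => g ∈ E p))
    rw [Fintype.card_congr e, Fintype.card_pi]
    exact Finset.prod_congr rfl (fun p _ => Fintype.card_coe _)
  rw [hcard, Finset.prod_mul_distrib, prod_dd_inv_pow m hm u.card]
  congr 1
  exact Nat.cast_prod _ _
end CRT

section General

lemma measurable_cellAuto (d : ℕ) [NeZero d] (l r : ℤ) (lam' : ℤ → ZMod d) :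
    Measurable (cellAuto d l r lam') :=
  measurable_pi_lambda _ (fun i => Finset.measurable_sum _ (fun j _ =>
    (measurable_of_countable (fun c => lam' j * c)).comp (measurable_pi_apply (i + j))))

lemma cellAuto_iterate_depends (d : ℕ) (l r : ℤ) (hlr : l ≤ r) (lam' : ℤ → ZMod d) (n : ℕ) :
    ∀ (i : ℤ) (x y : ℤ → ZMod d), (∀ j ∈ Finset.Icc (i + n * l) (i + n * r), x j = y j) →
      (cellAuto d l r lam')^[n] x i = (cellAuto d l r lam')^[n] y i := by
  induction n with
  | zero =>
    intro i x y h
    simpa using h i (by simp)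
  | succ k ih =>
    intro i x y h
    rw [Function.iterate_succ', Function.comp_apply, Function.comp_apply]
    show cellAuto d l r lam' ((cellAuto d l r lam')^[k] x) i
        = cellAuto d l r lam' ((cellAuto d l r lam')^[k] y) i
    simp only [cellAuto]
    refine Finset.sum_congr rfl (fun j hj => ?_)
    congr 1
    refine ih (i + j) x y (fun j' hj' => h j' ?_)
    simp only [Finset.mem_Icc] at hj hj' ⊢
    push_cast at hj' ⊢
    constructor
    · nlinarith [hj.1, hj'.1]
    · nlinarith [hj.2, hj'.2]

open scoped Classical in
lemma set_eq_restrict (d : ℕ) [NeZero d] (S : Set (ℤ → ZMod d)) (u : Finset ℤ)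
    (hdep : ∀ y z : ℤ → ZMod d, (∀ j ∈ u, y j = z j) → (y ∈ S ↔ z ∈ S)) :
    S = {y : ℤ → ZMod d | (fun i : u => y i) ∈ Finset.univ.filter
      (fun g : (i : u) → ZMod d =>
        (fun j => if h : j ∈ u then g ⟨j, h⟩ else 0) ∈ S)} := by
  ext y
  simp only [Set.mem_setOf_eq, Finset.mem_filter, Finset.mem_univ, true_and]
  have hagree : ∀ j ∈ u, y j = (fun j => if h : j ∈ u then (fun i : u => y i) ⟨j, h⟩ else 0) j :=
    fun j hj => by simp [dif_pos hj]
  exact hdep _ _ hagree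

end General
open scoped ENNReal in
lemma tendsto_finprod {ι : Type*} (s : Finset ι) (f : ι → ℕ → ℝ≥0∞) (g : ι → ℝ≥0∞)
    (hg : ∀ i, g i ≠ ⊤) (h : ∀ i ∈ s, Tendsto (f i) atTop (nhds (g i))) :
    Tendsto (fun n => ∏ i ∈ s, f i n) atTop (nhds (∏ i ∈ s, g i)) := by
  classical
  induction s using Finset.induction with
  | empty => simpa using tendsto_const_nhds
  | insert a s' hns ih =>
    simp only [Finset.prod_insert hns]
    exact ENNReal.Tendsto.mul (h a (Finset.mem_insert_self a s'))
      (Or.inr (ENNReal.prod_ne_top (fun i _ => hg i)))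
      (ih (fun i hi => h i (Finset.mem_insert_of_mem hi)))
      (Or.inr (hg a))
/-- Writing `m = p_1^{k_1} ⋯ p_h^{k_h}` for its prime factorization, a surjective linear
cellular automaton `T_f` over `ZMod m` is strong mixing for the uniform Bernoulli measure
iff, for every prime factor `p_i` of `m`, the cellular automaton over `ZMod p_i^{k_i}`
whose local rule is `f` reduced mod `p_i^{k_i}` is strong mixing for the uniform
Bernoulli measure on `(ZMod p_i^{k_i})^ℤ`. -/
theorem strongMixing_iff_forall_primePow
    (m : ℕ) (hm : 2 ≤ m) (l r : ℤ) (hlr : l ≤ r) (lam : ℤ → ZMod m)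
    (hsurj : Function.Surjective (cellAuto m l r lam))
    (μ : Measure (ℤ → ZMod m)) (hμ : IsUniformBernoulli m μ) :
    StrongMixing (cellAuto m l r lam) μ ↔
      ∀ p ∈ m.primeFactors,
        ∀ μp : Measure (ℤ → ZMod (p ^ m.factorization p)),
          IsUniformBernoulli (p ^ m.factorization p) μp →
          StrongMixing
            (cellAuto (p ^ m.factorization p) l r
              (fun i => ZMod.castHom (Nat.ordProj_dvd m p)
                (ZMod (p ^ m.factorization p)) (lam i)))
            μp := by
  haveI : NeZero m := ⟨by omega⟩
  haveI := fun p : {p : ℕ // p ∈ m.primeFactors} => dd_nezero m p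
  haveI := hμ.1
  constructor
  · -- forward
    intro hmix p hp μp hμp
    have hub : IsUniformBernoulli (dd m ⟨p, hp⟩) (μ.map (Phi m ⟨p, hp⟩)) := map_ub m ⟨p, hp⟩ μ hμ
    have hμp_eq : μp = μ.map (Phi m ⟨p, hp⟩) := ub_unique (dd m ⟨p, hp⟩) μp _ hμp hub
    show StrongMixing (cellAuto (dd m ⟨p, hp⟩) l r (fun i => cst m ⟨p, hp⟩ (lam i))) μp
    rw [hμp_eq]
    intro A B hA hB
    have hTp : Measurable (cellAuto (dd m ⟨p, hp⟩) l r (fun i => cst m ⟨p, hp⟩ (lam i))) :=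
      measurable_cellAuto _ _ _ _
    have hPh := measurable_Phi m ⟨p, hp⟩
    have key : ∀ n : ℕ,
        (μ.map (Phi m ⟨p, hp⟩))
          ((cellAuto (dd m ⟨p, hp⟩) l r (fun i => cst m ⟨p, hp⟩ (lam i)))^[n] ⁻¹' A ∩ B)
        = μ ((cellAuto m l r lam)^[n] ⁻¹' (Phi m ⟨p, hp⟩ ⁻¹' A) ∩ Phi m ⟨p, hp⟩ ⁻¹' B) := by
      intro n
      rw [Measure.map_apply hPh (((hTp.iterate n) hA).inter hB), Set.preimage_inter,
        preimage_iter]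
    simp only [key]
    rw [Measure.map_apply hPh hA, Measure.map_apply hPh hB]
    exact hmix _ _ (hPh hA) (hPh hB)
  · -- reverse
    intro H
    classical
    have hmixp : ∀ p : {p : ℕ // p ∈ m.primeFactors},
        StrongMixing (cellAuto (dd m p) l r (fun i => cst m p (lam i))) (μ.map (Phi m p)) := by
      intro p
      exact H p.1 p.2 (μ.map (Phi m p)) (map_ub m p μ hμ)
    have hprobp : ∀ p : {p : ℕ // p ∈ m.primeFactors},
        IsProbabilityMeasure (μ.map (Phi m p)) := fun p => (map_ub m p μ hμ).1
    have hpresp : ∀ p : {p : ℕ // p ∈ m.primeFactors}, ∀ S, MeasurableSet S →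
        (μ.map (Phi m p)) ((cellAuto (dd m p) l r (fun i => cst m p (lam i))) ⁻¹' S)
          = (μ.map (Phi m p)) S := by
      intro p S hS
      haveI := hprobp p
      exact StrongMixing.preserving (measurable_cellAuto _ _ _ _) (hmixp p) hS
    -- core factorization of cylinder measures
    have core : ∀ (n : ℕ) (s t : Finset ℤ) (a b : ℤ → ZMod m),
        μ ((cellAuto m l r lam)^[n] ⁻¹' {x | ∀ i ∈ s, x i = a i} ∩ {x | ∀ i ∈ t, x i = b i})
        = ∏ p : {p : ℕ // p ∈ m.primeFactors}, (μ.map (Phi m p))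
            ((cellAuto (dd m p) l r (fun i => cst m p (lam i)))^[n] ⁻¹'
              {y | ∀ i ∈ s, y i = cst m p (a i)} ∩ {y | ∀ i ∈ t, y i = cst m p (b i)}) := by
      intro n s t a b
      set u : Finset ℤ := t ∪ s.biUnion (fun i => Finset.Icc (i + n * l) (i + n * r)) with hu
      have hsem : ∀ (p : {p : ℕ // p ∈ m.primeFactors}) (x : ℤ → ZMod m),
          Phi m p ((cellAuto m l r lam)^[n] x)
            = (cellAuto (dd m p) l r (fun i => cst m p (lam i)))^[n] (Phi m p x) :=
        fun p x => ((semiconj_Phi m l r lam p).iterate_right n) x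
      have hdep : ∀ p : {p : ℕ // p ∈ m.primeFactors}, ∀ y z : ℤ → ZMod (dd m p),
          (∀ j ∈ u, y j = z j) →
          (y ∈ (cellAuto (dd m p) l r (fun i => cst m p (lam i)))^[n] ⁻¹'
              {w | ∀ i ∈ s, w i = cst m p (a i)} ∩ {w | ∀ i ∈ t, w i = cst m p (b i)}
            ↔ z ∈ (cellAuto (dd m p) l r (fun i => cst m p (lam i)))^[n] ⁻¹'
              {w | ∀ i ∈ s, w i = cst m p (a i)} ∩ {w | ∀ i ∈ t, w i = cst m p (b i)}) := by
        intro p y z hyz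
        simp only [Set.mem_inter_iff, Set.mem_preimage, Set.mem_setOf_eq]
        have h1 : ∀ i ∈ s, (cellAuto (dd m p) l r fun i => cst m p (lam i))^[n] y i
            = (cellAuto (dd m p) l r fun i => cst m p (lam i))^[n] z i := by
          intro i hi
          refine cellAuto_iterate_depends (dd m p) l r hlr _ n i y z (fun j hj => hyz j ?_)
          exact Finset.mem_union_right _ (Finset.mem_biUnion.mpr ⟨i, hi, hj⟩)
        constructor
        · rintro ⟨ha', hb'⟩
          exact ⟨fun i hi => (h1 i hi).symm.trans (ha' i hi),
            fun i hi => (hyz i (Finset.mem_union_left _ hi)).symm.trans (hb' i hi)⟩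
        · rintro ⟨ha', hb'⟩
          exact ⟨fun i hi => (h1 i hi).trans (ha' i hi),
            fun i hi => (hyz i (Finset.mem_union_left _ hi)).trans (hb' i hi)⟩
      have hsplit : (cellAuto m l r lam)^[n] ⁻¹' {x | ∀ i ∈ s, x i = a i}
            ∩ {x | ∀ i ∈ t, x i = b i}
          = ⋂ p : {p : ℕ // p ∈ m.primeFactors}, Phi m p ⁻¹'
              ((cellAuto (dd m p) l r (fun i => cst m p (lam i)))^[n] ⁻¹'
                {y | ∀ i ∈ s, y i = cst m p (a i)} ∩ {y | ∀ i ∈ t, y i = cst m p (b i)}) := by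
        ext x
        simp only [Set.mem_inter_iff, Set.mem_preimage, Set.mem_setOf_eq, Set.mem_iInter]
        constructor
        · rintro ⟨h1, h2⟩ p
          constructor
          · intro i hi
            rw [← hsem p x]
            show cst m p ((cellAuto m l r lam)^[n] x i) = cst m p (a i)
            rw [h1 i hi]
          · intro i hi
            show cst m p (x i) = cst m p (b i)
            rw [h2 i hi]
        · intro h
          constructor
          · intro i hi
            apply crt_inj m hm
            intro p
            have h4 := (h p).1 i hi
            rw [← hsem p x] at h4
            exact h4
          · intro i hi
            apply crt_inj m hm
            intro p
            exact (h p).2 i hi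
      rw [hsplit]
      exact measure_iInter_factorize m hm μ hμ u _ _
        (fun p => set_eq_restrict (dd m p) _ u (hdep p))
    have hTmeas : Measurable (cellAuto m l r lam) := measurable_cellAuto m l r lam
    have hpres : ∀ S : Set (ℤ → ZMod m), MeasurableSet S →
        μ ((cellAuto m l r lam) ⁻¹' S) = μ S := by
      haveI : IsProbabilityMeasure (μ.map (cellAuto m l r lam)) :=
        Measure.isProbabilityMeasure_map hTmeas.aemeasurable
      have hmap : μ.map (cellAuto m l r lam) = μ := by
        refine ext_of_generate_finite (Cyl m) (generateFrom_Cyl m) (isPiSystem_Cyl m) ?_ ?_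
        · rintro S ⟨s, a, rfl⟩
          rw [Measure.map_apply hTmeas (measurableSet_cylSet m s a)]
          have h1 : (cellAuto m l r lam) ⁻¹' {x | ∀ i ∈ s, x i = a i}
              = (cellAuto m l r lam)^[1] ⁻¹' {x | ∀ i ∈ s, x i = a i}
                ∩ {x | ∀ i ∈ (∅ : Finset ℤ), x i = a i} := by
            simp
          rw [h1, core 1 s ∅ a a]
          have h2 : ∀ p : {p : ℕ // p ∈ m.primeFactors}, (μ.map (Phi m p))
              ((cellAuto (dd m p) l r (fun i => cst m p (lam i)))^[1] ⁻¹'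
                {y | ∀ i ∈ s, y i = cst m p (a i)}
                ∩ {y | ∀ i ∈ (∅ : Finset ℤ), y i = cst m p (a i)})
              = ((dd m p : ENNReal))⁻¹ ^ s.card := by
            intro p
            have h3 : {y : ℤ → ZMod (dd m p) | ∀ i ∈ (∅ : Finset ℤ), y i = cst m p (a i)}
                = Set.univ := by
              ext y; simp
            rw [h3, Set.inter_univ, Function.iterate_one,
              hpresp p _ (measurableSet_cylSet _ s _), (map_ub m p μ hμ).2 s _]
          rw [Finset.prod_congr rfl (fun p _ => h2 p), prod_dd_inv_pow m hm s.card]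
          exact (hμ.2 s a).symm
        · rw [Measure.map_apply hTmeas MeasurableSet.univ]
          simp
      intro S hS
      rw [← Measure.map_apply hTmeas hS, hmap]
    refine strongMixing_of_piSystem _ hTmeas μ hpres (Cyl m) (isPiSystem_Cyl m)
      (generateFrom_Cyl m) ?_
    rintro A ⟨s, a, rfl⟩ B ⟨t, b, rfl⟩
    simp only [core]
    have hlim := tendsto_finprod Finset.univ
      (fun (p : {p : ℕ // p ∈ m.primeFactors}) (n : ℕ) => (μ.map (Phi m p))
        ((cellAuto (dd m p) l r (fun i => cst m p (lam i)))^[n] ⁻¹'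
          {y | ∀ i ∈ s, y i = cst m p (a i)} ∩ {y | ∀ i ∈ t, y i = cst m p (b i)}))
      (fun p => (μ.map (Phi m p)) {y | ∀ i ∈ s, y i = cst m p (a i)}
        * (μ.map (Phi m p)) {y | ∀ i ∈ t, y i = cst m p (b i)})
      (fun p => by
        haveI := hprobp p
        exact ENNReal.mul_ne_top (measure_ne_top _ _) (measure_ne_top _ _))
      (fun p _ => hmixp p _ _ (measurableSet_cylSet _ s _) (measurableSet_cylSet _ t _))
    have hval : (∏ p : {p : ℕ // p ∈ m.primeFactors},
        ((μ.map (Phi m p)) {y | ∀ i ∈ s, y i = cst m p (a i)}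
          * (μ.map (Phi m p)) {y | ∀ i ∈ t, y i = cst m p (b i)}))
        = μ {x | ∀ i ∈ s, x i = a i} * μ {x | ∀ i ∈ t, x i = b i} := by
      rw [Finset.prod_mul_distrib]
      congr 1
      · rw [Finset.prod_congr rfl (fun p _ => (map_ub m p μ hμ).2 s (fun i => cst m p (a i))),
          prod_dd_inv_pow m hm s.card, hμ.2 s a]
      · rw [Finset.prod_congr rfl (fun p _ => (map_ub m p μ hμ).2 t (fun i => cst m p (b i))),
          prod_dd_inv_pow m hm t.card, hμ.2 t b]
    rw [← hval]
    exact hlim
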